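/- Let m > 0 and f(τ,u,v,t) be degree m, real-analytic in v̄, with θ_f = −(2i)^{1/2}(τ−τ̄)^{1/2} e^{−2πim(v−v̄)²/(τ−τ̄)} ∂f/∂v̄. If for k ∈ ℤ, f(τ, u+kτ/(2m), v+kτ/(2m), t) = e^{2πik(v−u)} f(τ,u,v,t), then θ_f(τ, u+kτ/(2m), v+kτ/(2m), t) = e^{2πik(v̄−u)} e^{(πik²/(2m))(τ̄−τ)} θ_f(τ,u,v,t). -/

import Mathlib

open Complex

noncomputable def πc : ℂ := Real.pi

/-- Antiholomorphic Wirtinger derivative `∂f/∂z̄`. -/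
noncomputable def wdb (f : ℂ → ℂ) (z : ℂ) : ℂ :=
  (fderiv ℝ f z 1 + Complex.I * fderiv ℝ f z Complex.I) / 2

/-- `θ_f = −(2i)^{1/2}(τ−τ̄)^{1/2} e^{−2πim(v−v̄)²/(τ−τ̄)} ∂f/∂v̄`. -/
noncomputable def thetaG (m : ℝ) (f : ℂ → ℂ → ℂ → ℂ → ℂ) : ℂ → ℂ → ℂ → ℂ → ℂ :=
  fun τ u v t =>
    -((2 * I) ^ ((1 : ℂ) / 2)) * (τ - (starRingEnd ℂ) τ) ^ ((1 : ℂ) / 2) *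
      Complex.exp (-2 * πc * I * m * (v - (starRingEnd ℂ) v) ^ 2 / (τ - (starRingEnd ℂ) τ)) *
      wdb (fun v' => f τ u v' t) v

lemma wdb_shift (a K c : ℂ) (g : ℂ → ℂ) (z : ℂ) (hg : DifferentiableAt ℝ g (z - c)) :
    wdb (fun w => Complex.exp (a * w) * (K * g (w - c))) z
      = Complex.exp (a * z) * K * wdb g (z - c) := by
  have hφ : HasFDerivAt (fun w => Complex.exp (a * w))
      ((ContinuousLinearMap.smulRight (1 : ℂ →L[ℂ] ℂ) (a * Complex.exp (a * z))).restrictScalars ℝ) z := by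
    have h : HasDerivAt (fun w => Complex.exp (a * w)) (a * Complex.exp (a * z)) z := by
      simpa [mul_comm] using ((hasDerivAt_id z).const_mul a).cexp
    exact (h.hasFDerivAt).restrictScalars ℝ
  have hsub : HasFDerivAt (fun w : ℂ => w - c) (ContinuousLinearMap.id ℝ ℂ) z := by
    simpa using (hasFDerivAt_id z).sub_const c
  have hgc : HasFDerivAt (fun w => g (w - c)) (fderiv ℝ g (z - c)) z := by
    exact (hg.hasFDerivAt).comp z hsub
  have hG : HasFDerivAt (fun w => K * g (w - c)) (K • fderiv ℝ g (z - c)) z := hgc.const_mul K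
  have hmul := hφ.mul hG
  rw [wdb, HasFDerivAt.fderiv (f := fun w => Complex.exp (a * w) * (K * g (w - c))) hmul, wdb]
  simp only [ContinuousLinearMap.add_apply, ContinuousLinearMap.smul_apply,
    ContinuousLinearMap.coe_restrictScalars', ContinuousLinearMap.smulRight_apply,
    ContinuousLinearMap.one_apply, smul_eq_mul]
  linear_combination (K * g (z - c) * (a * Complex.exp (a * z)) / 2) * Complex.I_sq

/-- Elliptic transformation of `θ_f` under `(u,v) ↦ (u + kτ/(2m), v + kτ/(2m))`. -/
theorem thetaG_elliptic_small_tau (m : ℝ) (hm : 0 < m) (f : ℂ → ℂ → ℂ → ℂ → ℂ)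
    (hdeg : ∀ τ u v t, f τ u v t = Complex.exp (2 * πc * I * m * t) * f τ u v 0)
    (hdiff : ∀ τ u t, 0 < τ.im → Differentiable ℝ (fun v => f τ u v t))
    (k : ℤ)
    (hell : ∀ τ u v t : ℂ, 0 < τ.im →
      f τ (u + k * τ / (2 * m)) (v + k * τ / (2 * m)) t =
        Complex.exp (2 * πc * I * k * (v - u)) * f τ u v t) :
    ∀ τ u v t : ℂ, 0 < τ.im →
      thetaG m f τ (u + k * τ / (2 * m)) (v + k * τ / (2 * m)) t =
        Complex.exp (2 * πc * I * k * ((starRingEnd ℂ) v - u)) *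
          Complex.exp (πc * I * (k : ℂ) ^ 2 / (2 * m) * ((starRingEnd ℂ) τ - τ)) *
          thetaG m f τ u v t := by
  intro τ u v t hτ
  set c : ℂ := (k : ℂ) * τ / (2 * (m : ℂ)) with hc
  set a : ℂ := 2 * πc * I * (k : ℂ) with ha
  have hm' : (m : ℂ) ≠ 0 := by exact_mod_cast hm.ne'
  have hT : τ - (starRingEnd ℂ) τ ≠ 0 := by
    intro h
    have : τ.im = 0 := by
      have := congrArg Complex.im h
      simp [Complex.sub_im, Complex.conj_im] at this
      linarith [this]
    linarith
  -- rewrite the shifted function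
  have hfun : (fun v' => f τ (u + c) v' t)
      = fun w => Complex.exp (a * w) * (Complex.exp (a * (-(c + u))) * f τ u (w - c) t) := by
    funext w
    have h := hell τ u (w - c) t hτ
    have hw : w - c + c = w := by ring
    rw [hw] at h
    rw [h, ← mul_assoc, ← Complex.exp_add]
    congr 2
    ring
  -- wirtinger derivative transformation
  have hD : wdb (fun v' => f τ (u + c) v' t) (v + c)
      = Complex.exp (2 * πc * I * (k : ℂ) * (v - u)) * wdb (fun v' => f τ u v' t) v := by
    rw [hfun, wdb_shift a _ c _ (v + c) ((hdiff τ u t hτ) (v + c - c))]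
    have hvc : v + c - c = v := by ring
    rw [hvc, ← Complex.exp_add]
    congr 2
    ring
  have hconj : (starRingEnd ℂ) c = (k : ℂ) * (starRingEnd ℂ) τ / (2 * (m : ℂ)) := by
    simp [hc, map_div₀, map_mul, Complex.conj_ofNat]
  -- exponential identity
  have hexp : Complex.exp (-2 * πc * I * m * ((v + c) - (starRingEnd ℂ) (v + c)) ^ 2 / (τ - (starRingEnd ℂ) τ))
        * Complex.exp (2 * πc * I * (k : ℂ) * (v - u))
      = Complex.exp (2 * πc * I * k * ((starRingEnd ℂ) v - u)) *
        Complex.exp (πc * I * (k : ℂ) ^ 2 / (2 * m) * ((starRingEnd ℂ) τ - τ)) *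
        Complex.exp (-2 * πc * I * m * (v - (starRingEnd ℂ) v) ^ 2 / (τ - (starRingEnd ℂ) τ)) := by
    rw [← Complex.exp_add, ← Complex.exp_add, ← Complex.exp_add]
    congr 1
    rw [map_add, hconj, hc]
    field_simp
    ring
  simp only [thetaG]
  have hcu : u + (k : ℂ) * τ / (2 * (m : ℂ)) = u + c := rfl
  have hcv : v + (k : ℂ) * τ / (2 * (m : ℂ)) = v + c := rfl
  rw [hcu, hcv, hD]
  linear_combination (-((2 * I) ^ ((1:ℂ)/2)) * (τ - (starRingEnd ℂ) τ) ^ ((1:ℂ)/2) *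
    wdb (fun v' => f τ u v' t) v) * hexp
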